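/- Let G be a locally finite group, A a finite alphabet, and X ⊆ A^G a G-SFT. Then the automorphism group Aut(X) of X is locally finite: every finite subset of Aut(X) generates a finite subgroup of Aut(X). -/

import Mathlib

open scoped Pointwise symmDiff

namespace LFPaper

variable {G A B : Type*}

/-- The right shift action: `(shift g x) h = x (h * g)`. -/
def shift [Group G] (g : G) (x : G → A) : G → A := fun h => x (h * g)

/-- Restriction of a configuration to a finite shape. -/
def restrictF (F : Finset G) (x : G → A) : F → A := fun a => x a

/-- A `G`-shift space: a closed, shift-invariant subset of the full shift. -/
def IsShiftSpace [Group G] [TopologicalSpace A] (X : Set (G → A)) : Prop :=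
  IsClosed X ∧ ∀ g : G, ∀ x ∈ X, shift g x ∈ X

/-- A `G`-shift of finite type: the set of configurations avoiding a finite
set of forbidden patterns on a finite shape. -/
def IsSFT [Group G] (X : Set (G → A)) : Prop :=
  ∃ (F : Finset G) (P : Set (F → A)),
    X = {x : G → A | ∀ g : G, restrictF F (shift g x) ∉ P}

/-- The `F`-language of `X`: all restrictions of elements of `X` to `F`. -/
def language (X : Set (G → A)) (F : Finset G) : Set (F → A) :=
  {w | ∃ x ∈ X, restrictF F x = w}

/-- Strong irreducibility of a shift. -/
def StronglyIrreducible [Group G] (X : Set (G → A)) : Prop :=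
  ∃ K : Finset G, ∀ (Fu Fv : Finset G) (u : Fu → A) (v : Fv → A),
    Disjoint (Fu : Set G) ((K : Set G) * (Fv : Set G)) →
    u ∈ language X Fu → v ∈ language X Fv →
    ∃ x ∈ X, restrictF Fu x = u ∧ restrictF Fv x = v

/-- The free `G`-extension of an `H`-shift `Y`: all configurations whose
restriction to every right coset of `H` (pulled back to `H`) lies in `Y`. -/
def freeExt [Group G] (H : Subgroup G) (Y : Set (H → A)) : Set (G → A) :=
  {x : G → A | ∀ g : G, (fun h : H => x ((h : G) * g)) ∈ Y}

/-- Local finiteness of a group: every finitely generated subgroup is finite. -/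
def IsLocallyFinite (G : Type*) [Group G] : Prop :=
  ∀ S : Finset G, Finite ↥(Subgroup.closure (S : Set G))

/-- A (left) Følner sequence for a countable group. -/
def IsFolner [Group G] (F : ℕ → Finset G) : Prop :=
  (∀ n, (F n).Nonempty) ∧ (∀ g : G, ∃ n, g ∈ F n) ∧
  ∀ g : G, Filter.Tendsto
    (fun n => (Set.ncard ((((fun h => g * h) '' (F n : Set G))) ∆ ((F n : Set G))) : ℝ) /
      ((F n).card : ℝ))
    Filter.atTop (nhds 0)

/-- Cardinality of the `F`-language. -/
noncomputable def langCard (X : Set (G → A)) (F : Finset G) : ℕ :=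
  (language X F).ncard

/-- A shift-commuting self-homeomorphism of `X` (an automorphism of the shift `X`). -/
def IsAutomorphism [Group G] [TopologicalSpace A] (X : Set (G → A)) (φ : Equiv.Perm X) : Prop :=
  Continuous φ ∧ Continuous φ.symm ∧
  ∀ (g : G) (x y : X), (y : G → A) = shift g (x : G → A) →
    (φ y : G → A) = shift g ((φ x : G → A))

section Aux

variable [Group G]

theorem shift_shift (g g' : G) (x : G → A) :
    shift g' (shift g x) = shift (g' * g) x := by
  funext h; simp [shift, mul_assoc]

theorem sft_shiftInvariant {X : Set (G → A)} (hX : IsSFT X) :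
    ∀ g : G, ∀ x ∈ X, shift g x ∈ X := by
  obtain ⟨F, P, rfl⟩ := hX
  intro g x hx g'
  rw [shift_shift]
  exact hx (g' * g)

/-- Shift-commutation of a permutation of `X`. -/
def AuxCommutes (X : Set (G → A)) (φ : Equiv.Perm X) : Prop :=
  ∀ (g : G) (x y : X), (y : G → A) = shift g (x : G → A) →
    (φ y : G → A) = shift g ((φ x : G → A))

/-- `φ` has memory contained in `E`. -/
def AuxLocal (X : Set (G → A)) (E : Set G) (φ : Equiv.Perm X) : Prop :=
  ∀ x y : X, (∀ g ∈ E, (x : G → A) g = (y : G → A) g) →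
    (φ x : G → A) 1 = (φ y : G → A) 1

theorem auxCommutes_one {X : Set (G → A)} : AuxCommutes X 1 := by
  intro g x y h
  simpa using h

theorem auxCommutes_mul {X : Set (G → A)} {a b : Equiv.Perm X}
    (ha : AuxCommutes X a) (hb : AuxCommutes X b) : AuxCommutes X (a * b) := by
  intro g x y h
  have hb' := hb g x y h
  have := ha g (b x) (b y) hb'
  simpa [Equiv.Perm.mul_apply] using this

theorem auxCommutes_inv {X : Set (G → A)} (hinv : ∀ g : G, ∀ x ∈ X, shift g x ∈ X)
    {a : Equiv.Perm X} (ha : AuxCommutes X a) : AuxCommutes X a⁻¹ := by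
  intro g x y h
  set x' : X := a⁻¹ x with hx'def
  have hx' : shift g (x' : G → A) ∈ X := hinv g _ x'.2
  have key := ha g x' ⟨_, hx'⟩ rfl
  have hax' : (a x' : G → A) = (x : G → A) := by
    simp [hx'def]
  rw [hax', ← h] at key
  have h1 : a ⟨shift g (x' : G → A), hx'⟩ = y := Subtype.ext key
  have h2 : (⟨shift g (x' : G → A), hx'⟩ : X) = a⁻¹ y := by
    rw [← h1]; simp
  exact (congrArg Subtype.val h2).symm

theorem aux_apply {X : Set (G → A)} (hinv : ∀ g : G, ∀ x ∈ X, shift g x ∈ X)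
    {a : Equiv.Perm X} (ha : AuxCommutes X a) (x : X) (g : G) :
    (a x : G → A) g = (a ⟨shift g (x : G → A), hinv g x x.2⟩ : G → A) 1 := by
  have := ha g x ⟨shift g (x : G → A), hinv g x x.2⟩ rfl
  rw [this]
  simp [shift]

theorem auxLocal_mono {X : Set (G → A)} {E E' : Set G} (hEE : E ⊆ E')
    {a : Equiv.Perm X} (h : AuxLocal X E a) : AuxLocal X E' a :=
  fun x y hxy => h x y fun g hg => hxy g (hEE hg)

theorem auxLocal_one {X : Set (G → A)} {E : Set G} (hE : (1 : G) ∈ E) :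
    AuxLocal X E 1 := by
  intro x y h
  simpa using h 1 hE

theorem auxLocal_mul {X : Set (G → A)} (H : Subgroup G)
    (hinv : ∀ g : G, ∀ x ∈ X, shift g x ∈ X) {a b : Equiv.Perm X}
    (hb : AuxCommutes X b) (hal : AuxLocal X ↑H a) (hbl : AuxLocal X ↑H b) :
    AuxLocal X ↑H (a * b) := by
  intro x y hxy
  simp only [Equiv.Perm.mul_apply]
  apply hal (b x) (b y)
  intro g hg
  rw [aux_apply hinv hb x g, aux_apply hinv hb y g]
  apply hbl
  intro k hk
  show (shift g (x : G → A)) k = (shift g (y : G → A)) k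
  simp only [shift]
  exact hxy (k * g) (mul_mem hk hg)

variable [TopologicalSpace A] [DiscreteTopology A] [Finite A]

theorem sft_isClosed {X : Set (G → A)} (hX : IsSFT X) : IsClosed X := by
  obtain ⟨F, P, rfl⟩ := hX
  have heq : {x : G → A | ∀ g : G, restrictF F (shift g x) ∉ P}
      = ⋂ g : G, (fun x => restrictF F (shift g x)) ⁻¹' Pᶜ := by
    ext x
    simp only [Set.mem_setOf_eq, Set.mem_iInter, Set.mem_preimage, Set.mem_compl_iff]
  rw [heq]
  refine isClosed_iInter fun g => IsClosed.preimage ?_ (isClosed_discrete _)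
  exact continuous_pi fun a => continuous_apply ((a : G) * g)

theorem exists_memory {X : Set (G → A)} (hcl : IsClosed X)
    (r : X → A) (hr : Continuous r) :
    ∃ F : Finset G, ∀ x y : X,
      (∀ g ∈ F, (x : G → A) g = (y : G → A) g) → r x = r y := by
  classical
  have hcomp : IsCompact X := hcl.isCompact
  have key : ∀ x : X, ∃ I : Finset G, ∀ y : X,
      (∀ g ∈ I, (y : G → A) g = (x : G → A) g) → r y = r x := by
    intro x
    have hopen : IsOpen (r ⁻¹' {r x}) := hr.isOpen_preimage _ (isOpen_discrete _)
    obtain ⟨V, hV, hVeq⟩ := isOpen_induced_iff.mp hopen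
    have hxV : (x : G → A) ∈ V := by
      have : x ∈ Subtype.val ⁻¹' V := by
        rw [hVeq]; exact rfl
      exact this
    obtain ⟨I, u, hu, hsub⟩ := isOpen_pi_iff.mp hV (x : G → A) hxV
    refine ⟨I, fun y hy => ?_⟩
    have hyV : (y : G → A) ∈ V := by
      apply hsub
      intro g hg
      rw [Finset.mem_coe] at hg
      rw [hy g hg]
      exact (hu g hg).2
    have : y ∈ r ⁻¹' {r x} := by rw [← hVeq]; exact hyV
    exact this
  choose I hI using key
  set C : X → Set (G → A) := fun x => {y | ∀ g ∈ I x, y g = (x : G → A) g} with hC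
  have hCopen : ∀ x : X, IsOpen (C x) := by
    intro x
    have : C x = Set.pi (↑(I x) : Set G) (fun g => {(x : G → A) g}) := by
      ext y
      simp [hC, Set.mem_pi]
    rw [this]
    exact isOpen_set_pi (Finset.finite_toSet _) fun a _ => isOpen_discrete _
  have hcover : X ⊆ ⋃ x : X, C x := fun y hy =>
    Set.mem_iUnion.mpr ⟨⟨y, hy⟩, fun g _ => rfl⟩
  obtain ⟨t, ht⟩ := hcomp.elim_finite_subcover C hCopen hcover
  refine ⟨t.biUnion fun x => I x, fun x y hxy => ?_⟩
  have hxX : (x : G → A) ∈ ⋃ z ∈ t, C z := ht x.2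
  obtain ⟨z, hzt, hz⟩ := Set.mem_iUnion₂.mp hxX
  have hxz : ∀ g ∈ I z, (x : G → A) g = (z : G → A) g := hz
  have hyz : ∀ g ∈ I z, (y : G → A) g = (z : G → A) g := fun g hg =>
    (hxy g (Finset.mem_biUnion.mpr ⟨z, hzt, hg⟩)).symm.trans (hxz g hg)
  rw [hI z x hxz, hI z y hyz]

end Aux

/-- Over a locally finite group, the automorphism group of every `G`-SFT is
locally finite: any finite set of automorphisms generates a finite subgroup. -/
theorem aut_locallyFinite_of_locallyFinite [Group G] (hLF : IsLocallyFinite G)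
    [Fintype A] [Nonempty A] [TopologicalSpace A] [DiscreteTopology A]
    (X : Set (G → A)) (hX : IsSFT X)
    (S : Finset (Equiv.Perm X)) (hS : ∀ φ ∈ S, IsAutomorphism X φ) :
    Finite ↥(Subgroup.closure (S : Set (Equiv.Perm X))) := by
  classical
  have hinv : ∀ g : G, ∀ x ∈ X, shift g x ∈ X := sft_shiftInvariant hX
  have hcl : IsClosed X := sft_isClosed hX
  have hmem : ∀ φ ∈ S, ∃ F : Finset G, AuxLocal X ↑F φ ∧ AuxLocal X ↑F φ⁻¹ := by
    intro φ hφ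
    obtain ⟨hc, hc', _⟩ := hS φ hφ
    obtain ⟨F1, hF1⟩ := exists_memory hcl (fun x : X => (φ x : G → A) 1)
      ((continuous_apply (1 : G)).comp (continuous_subtype_val.comp hc))
    obtain ⟨F2, hF2⟩ := exists_memory hcl (fun x : X => (φ⁻¹ x : G → A) 1)
      ((continuous_apply (1 : G)).comp (continuous_subtype_val.comp
        (by simpa [Equiv.Perm.inv_def] using hc')))
    refine ⟨F1 ∪ F2, ?_, ?_⟩
    · exact auxLocal_mono (Finset.coe_subset.mpr Finset.subset_union_left)
        (fun x y h => hF1 x y fun g hg => h g (Finset.mem_coe.mpr hg))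
    · exact auxLocal_mono (Finset.coe_subset.mpr Finset.subset_union_right)
        (fun x y h => hF2 x y fun g hg => h g (Finset.mem_coe.mpr hg))
  choose! M hM using hmem
  set F₀ : Finset G := S.biUnion M with hF₀
  set H : Subgroup G := Subgroup.closure ((F₀ : Finset G) : Set G) with hH
  haveI hHfin : Finite ↥H := hLF F₀
  have hMH : ∀ φ ∈ S, ((M φ : Finset G) : Set G) ⊆ (H : Set G) := by
    intro φ hφ g hg
    exact Subgroup.subset_closure
      (Finset.mem_coe.mpr (Finset.mem_biUnion.mpr ⟨φ, hφ, Finset.mem_coe.mp hg⟩))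
  have h1H : (1 : G) ∈ (H : Set G) := H.one_mem
  have hq0 : ∀ φ ∈ Subgroup.closure (S : Set (Equiv.Perm X)),
      (AuxCommutes X φ ∧ AuxLocal X ↑H φ) ∧
        (AuxCommutes X φ⁻¹ ∧ AuxLocal X ↑H φ⁻¹) := by
    intro φ hφ
    induction hφ using Subgroup.closure_induction with
    | mem ψ hψ =>
        have h1 : AuxCommutes X ψ := (hS ψ hψ).2.2
        have h2 : AuxCommutes X ψ⁻¹ := auxCommutes_inv hinv h1
        have h3 : AuxLocal X ↑H ψ := auxLocal_mono (hMH ψ hψ) (hM ψ hψ).1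
        have h4 : AuxLocal X ↑H ψ⁻¹ := auxLocal_mono (hMH ψ hψ) (hM ψ hψ).2
        exact ⟨⟨h1, h3⟩, h2, h4⟩
    | one =>
        refine ⟨⟨auxCommutes_one, auxLocal_one h1H⟩, ?_⟩
        rw [inv_one]
        exact ⟨auxCommutes_one, auxLocal_one h1H⟩
    | mul a b ha hb iha ihb =>
        refine ⟨⟨auxCommutes_mul iha.1.1 ihb.1.1,
          auxLocal_mul H hinv ihb.1.1 iha.1.2 ihb.1.2⟩, ?_⟩
        rw [mul_inv_rev]
        exact ⟨auxCommutes_mul ihb.2.1 iha.2.1,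
          auxLocal_mul H hinv iha.2.1 ihb.2.2 iha.2.2⟩
    | inv a ha iha =>
        refine ⟨iha.2, ?_⟩
        rw [inv_inv]
        exact iha.1
  set Φ : ↥(Subgroup.closure (S : Set (Equiv.Perm X))) → ((↥H → A) → A) :=
    fun φ w =>
      if h : ∃ x : X, (fun k : ↥H => (x : G → A) (k : G)) = w then
        ((φ : Equiv.Perm X) h.choose : G → A) 1
      else Classical.arbitrary A with hΦ
  have hΦr : ∀ (φ : ↥(Subgroup.closure (S : Set (Equiv.Perm X)))) (x : X),
      Φ φ (fun k : ↥H => (x : G → A) (k : G)) = ((φ : Equiv.Perm X) x : G → A) 1 := by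
    intro φ x
    have hex : ∃ z : X, (fun k : ↥H => (z : G → A) (k : G))
        = (fun k : ↥H => (x : G → A) (k : G)) := ⟨x, rfl⟩
    simp only [hΦ, dif_pos hex]
    apply (hq0 φ.1 φ.2).1.2 hex.choose x
    intro g hg
    exact congrFun hex.choose_spec ⟨g, hg⟩
  have hΦinj : Function.Injective Φ := by
    intro φ ψ h
    apply Subtype.ext
    apply Equiv.ext
    intro x
    apply Subtype.ext
    funext g
    have hφc := (hq0 φ.1 φ.2).1.1
    have hψc := (hq0 ψ.1 ψ.2).1.1
    rw [aux_apply hinv hφc x g, aux_apply hinv hψc x g]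
    rw [← hΦr φ ⟨shift g (x : G → A), hinv g x x.2⟩,
      ← hΦr ψ ⟨shift g (x : G → A), hinv g x x.2⟩, h]
  exact Finite.of_injective Φ hΦinj

end LFPaper
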